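/- Let v be a vertex of a tree T on at least 3 vertices, and let S = {v, x, y} be a 3-subset containing v that maximizes the Steiner distance d(S), chosen so that the v,x-path P is a longest path in T starting from v. Then the distance from y to the path P equals the maximum over all vertices u of T of the distance from u to P. -/

import Mathlib

open SimpleGraph Finset

/-- The Steiner distance of a vertex set `S` in `G`: the minimum number of edges of a
connected subgraph of `G` whose vertex set contains `S`. -/
noncomputable def steinerDist {V : Type*} [Fintype V] (G : SimpleGraph V) (S : Set V) : ℕ :=
  sInf {n | ∃ H : G.Subgraph, H.Connected ∧ S ⊆ H.verts ∧ H.edgeSet.ncard = n}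

/-- The Steiner 3-eccentricity of a vertex `v`: the maximum Steiner distance over
3-subsets of vertices containing `v`. -/
noncomputable def ecc3 {V : Type*} [Fintype V] [DecidableEq V] (G : SimpleGraph V) (v : V) : ℕ :=
  sSup {n | ∃ S : Finset V, v ∈ S ∧ S.card = 3 ∧ steinerDist G (S : Set V) = n}

/-- The average Steiner 3-eccentricity of `G`. -/
noncomputable def aecc3 {V : Type*} [Fintype V] [DecidableEq V] (G : SimpleGraph V) : ℚ :=
  (∑ v : V, (ecc3 G v : ℚ)) / (Fintype.card V : ℚ)

/-- A walk is a segment if it is a nontrivial path whose endpoints do not have degree 2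
and all of whose internal vertices have degree 2. -/
def IsSegment {V : Type*} [Fintype V] (G : SimpleGraph V) [DecidableRel G.Adj] {u v : V}
    (p : G.Walk u v) : Prop :=
  p.IsPath ∧ 0 < p.length ∧ G.degree u ≠ 2 ∧ G.degree v ≠ 2 ∧
    ∀ w ∈ p.support, w ≠ u → w ≠ v → G.degree w = 2

/-- `G` has segment sequence `l`: its edge set is partitioned into segments whose
lengths are given by `l`. -/
def HasSegmentSequence {V : Type*} [Fintype V] (G : SimpleGraph V) [DecidableRel G.Adj]
    {m : ℕ} (l : Fin m → ℕ) : Prop :=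
  ∃ (u v : Fin m → V) (p : ∀ i, G.Walk (u i) (v i)),
    (∀ i, IsSegment G (p i)) ∧
    (∀ i j, i ≠ j → ∀ e ∈ (p i).edges, e ∉ (p j).edges) ∧
    (∀ e ∈ G.edgeSet, ∃ i, e ∈ (p i).edges) ∧
    (∀ i, (p i).length = l i)

/-- A caterpillar: a tree whose internal (non-leaf) vertices induce a path. -/
def IsCaterpillar {V : Type*} [Fintype V] (G : SimpleGraph V) [DecidableRel G.Adj] : Prop :=
  G.IsTree ∧ ∃ k : ℕ, Nonempty ((G.induce {v | 2 ≤ G.degree v}) ≃g SimpleGraph.pathGraph k)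

/-- Majorization of finite sequences. -/
def Majorizes {n : ℕ} (x y : Fin n → ℕ) : Prop :=
  (∀ k : ℕ, k < n →
    ∑ i ∈ Finset.univ.filter (fun i : Fin n => (i : ℕ) < k), y i ≤
    ∑ i ∈ Finset.univ.filter (fun i : Fin n => (i : ℕ) < k), x i) ∧
  ∑ i, x i = ∑ i, y i

/-- Distance from a vertex `u` to (the support of) a walk `p`. -/
noncomputable def distToPath {V : Type*} (G : SimpleGraph V) {a b : V} (p : G.Walk a b)
    (u : V) : ℕ :=
  sInf {n | ∃ w ∈ p.support, G.dist u w = n}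

/-- The eccentricity of a walk `p`: the maximum distance from a vertex to `p`. -/
noncomputable def eccPath {V : Type*} [Fintype V] (G : SimpleGraph V) {a b : V}
    (p : G.Walk a b) : ℕ :=
  sSup {n | ∃ u : V, distToPath G p u = n}

/-- `G` is a broom `B_{n,Δ}`: obtained from a path on `n - Δ + 2` vertices by attaching
`Δ - 2` pendant vertices to an internal vertex of the path. -/
def IsBroom {V : Type*} [Fintype V] (G : SimpleGraph V) (Δ : ℕ) : Prop :=
  ∃ (a b c : V) (p : G.Walk a b), p.IsPath ∧
    p.support.length = Fintype.card V - Δ + 2 ∧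
    c ∈ p.support ∧ c ≠ a ∧ c ≠ b ∧ ∀ v, v ∉ p.support → G.Adj c v

section AuxLemmas

variable {V : Type*} [Fintype V] [DecidableEq V] {G : SimpleGraph V}

private lemma distToPath_le' {a b : V} (P : G.Walk a b) {u z : V} (hz : z ∈ P.support) :
    distToPath G P u ≤ G.dist u z :=
  Nat.sInf_le ⟨z, hz, rfl⟩

private lemma exists_closest {a b : V} (P : G.Walk a b) (u : V) :
    ∃ w ∈ P.support, G.dist u w = distToPath G P u := by
  have hne : {n | ∃ w ∈ P.support, G.dist u w = n}.Nonempty :=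
    ⟨G.dist u a, a, P.start_mem_support, rfl⟩
  exact Nat.sInf_mem hne

private lemma first_edge {c d : V} (q : G.Walk c d) (h : c ≠ d) :
    ∃ z, s(c, z) ∈ q.edges := by
  cases q with
  | nil => exact absurd rfl h
  | cons h' p =>
    exact ⟨_, by rw [SimpleGraph.Walk.edges_cons]; exact List.mem_cons_self⟩

private lemma path_edges_mem (hT : G.IsTree) {H : G.Subgraph} (hH : H.Connected)
    {a b : V} (ha : a ∈ H.verts) (hb : b ∈ H.verts) {p : G.Walk a b} (hp : p.IsPath) :
    ∀ e ∈ p.edges, e ∈ H.edgeSet := by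
  obtain ⟨W⟩ := hH.coe ⟨a, ha⟩ ⟨b, hb⟩
  have hq : ∀ e ∈ (W.map H.hom).edges, e ∈ H.edgeSet := by
    intro e he
    rw [SimpleGraph.Walk.edges_map, List.mem_map] at he
    obtain ⟨e', he', rfl⟩ := he
    have h1 := SimpleGraph.Walk.edges_subset_edgeSet W he'
    rw [SimpleGraph.Subgraph.edgeSet_coe] at h1
    exact h1
  have hup : p = (W.map H.hom).bypass :=
    (hT.existsUnique_path a b).unique hp ((W.map H.hom).bypass_isPath)
  intro e he
  exact hq e ((W.map H.hom).edges_bypass_subset (hup ▸ he))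

private lemma steiner_eq (hT : G.IsTree) {a b : V} (P : G.Walk a b) (hP : P.IsPath) (u : V) :
    steinerDist G ({a, b, u} : Set V) = P.length + distToPath G P u := by
  classical
  obtain ⟨w, hw, hdw⟩ := exists_closest P u
  obtain ⟨R0, hR0⟩ := hT.isConnected.exists_walk_length_eq_dist u w
  set R := R0.bypass with hRdef
  have hR : R.IsPath := R0.bypass_isPath
  have hRlen : R.length = distToPath G P u := by
    have h1 : R.length ≤ R0.length := R0.length_bypass_le
    have h2 : G.dist u w ≤ R.length := SimpleGraph.dist_le R
    omega
  have hmeet : ∀ z ∈ R.support, z ∈ P.support → z = w := by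
    intro z hzR hzP
    by_contra hzw
    have h1 : (R.takeUntil z hzR).length + (R.dropUntil z hzR).length = R.length := by
      rw [← SimpleGraph.Walk.length_append, SimpleGraph.Walk.take_spec]
    have h2 : (R.dropUntil z hzR).length ≠ 0 := fun h0 =>
      hzw (SimpleGraph.Walk.eq_of_length_eq_zero h0)
    have h3 : G.dist u z ≤ (R.takeUntil z hzR).length := SimpleGraph.dist_le _
    have h4 : distToPath G P u ≤ G.dist u z := distToPath_le' P hzP
    omega
  have hdisj : ∀ e ∈ P.edges, e ∈ R.edges → False := by
    intro e
    induction e using Sym2.ind with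
    | _ c d =>
      intro heP heR
      have hcd : c ≠ d := (P.adj_of_mem_edges heP).ne
      have hc : c = w := hmeet c (R.fst_mem_support_of_mem_edges heR)
        (P.fst_mem_support_of_mem_edges heP)
      have hd : d = w := hmeet d (R.snd_mem_support_of_mem_edges heR)
        (P.snd_mem_support_of_mem_edges heP)
      exact hcd (hc.trans hd.symm)
  have hedgesP : P.edges.toFinset.card = P.length := by
    rw [List.toFinset_card_of_nodup hP.isTrail.edges_nodup, SimpleGraph.Walk.length_edges]
  have hedgesR : R.edges.toFinset.card = R.length := by
    rw [List.toFinset_card_of_nodup hR.isTrail.edges_nodup, SimpleGraph.Walk.length_edges]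
  have hdisjF : Disjoint P.edges.toFinset R.edges.toFinset := by
    rw [Finset.disjoint_left]
    intro e he he'
    exact hdisj e (List.mem_toFinset.mp he) (List.mem_toFinset.mp he')
  have hset : (P.toSubgraph ⊔ R.toSubgraph).edgeSet
      = ↑(P.edges.toFinset ∪ R.edges.toFinset) := by
    rw [SimpleGraph.Subgraph.edgeSet_sup, SimpleGraph.Walk.edgeSet_toSubgraph,
      SimpleGraph.Walk.edgeSet_toSubgraph]
    ext e; simp
  have hcard : (P.toSubgraph ⊔ R.toSubgraph).edgeSet.ncard = P.length + distToPath G P u := by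
    rw [hset, Set.ncard_coe_finset, Finset.card_union_of_disjoint hdisjF, hedgesP, hedgesR, hRlen]
  have hconnS : (P.toSubgraph ⊔ R.toSubgraph).Connected := by
    apply SimpleGraph.Subgraph.connected_sup (P.toSubgraph_connected).preconnected (R.toSubgraph_connected).preconnected
    exact ⟨w, by
      rw [SimpleGraph.Subgraph.verts_inf]
      exact ⟨(P.mem_verts_toSubgraph).mpr hw, R.end_mem_verts_toSubgraph⟩⟩
  have hverts : ({a, b, u} : Set V) ⊆ (P.toSubgraph ⊔ R.toSubgraph).verts := by
    rw [SimpleGraph.Subgraph.verts_sup]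
    rintro z (rfl | rfl | rfl)
    · exact Or.inl P.start_mem_verts_toSubgraph
    · exact Or.inl P.end_mem_verts_toSubgraph
    · exact Or.inr R.start_mem_verts_toSubgraph
  have hmem : (P.toSubgraph ⊔ R.toSubgraph).edgeSet.ncard ∈
      {n | ∃ H : G.Subgraph, H.Connected ∧ ({a, b, u} : Set V) ⊆ H.verts ∧ H.edgeSet.ncard = n} :=
    ⟨_, hconnS, hverts, rfl⟩
  refine le_antisymm (le_trans (Nat.sInf_le hmem) hcard.le) (le_csInf ⟨_, hmem⟩ ?_)
  rintro n ⟨H, hH, hsub, rfl⟩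
  have ha' : a ∈ H.verts := hsub (by simp)
  have hb' : b ∈ H.verts := hsub (by simp)
  have hu' : u ∈ H.verts := hsub (by simp)
  have hPe : ∀ e ∈ P.edges, e ∈ H.edgeSet := path_edges_mem hT hH ha' hb' hP
  have hw' : w ∈ H.verts := by
    rcases eq_or_ne a w with rfl | haw
    · exact ha'
    · obtain ⟨z, hz⟩ := first_edge ((P.takeUntil w hw).reverse) (fun h => haw h.symm)
      have hz' : s(w, z) ∈ P.edges :=
        P.edges_takeUntil_subset hw (by simpa using hz)
      exact H.edge_vert (SimpleGraph.Subgraph.mem_edgeSet.mp (hPe _ hz'))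
  have hRe : ∀ e ∈ R.edges, e ∈ H.edgeSet := path_edges_mem hT hH hu' hw' hR
  rw [← hcard, hset]
  apply Set.ncard_le_ncard _ H.edgeSet.toFinite
  intro e he
  simp only [Finset.coe_union, Set.mem_union, Finset.mem_coe, List.mem_toFinset] at he
  rcases he with he | he
  · exact hPe e he
  · exact hRe e he

private lemma steiner_le_card (hc : G.Connected) (S : Set V) :
    steinerDist G S ≤ G.edgeSet.ncard := by
  apply Nat.sInf_le
  refine ⟨⊤, ?_, by simp [SimpleGraph.Subgraph.verts_top], by rw [SimpleGraph.Subgraph.edgeSet_top]⟩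
  rw [SimpleGraph.Subgraph.connected_iff']
  exact (SimpleGraph.Subgraph.topIso (G := G)).connected_iff.mpr hc

end AuxLemmas

theorem stmt_6 {V : Type*} [Fintype V] [DecidableEq V] (G : SimpleGraph V) [DecidableRel G.Adj]
    (hT : G.IsTree) (hn : 3 ≤ Fintype.card V)
    (v x y : V) (hvx : v ≠ x) (hvy : v ≠ y) (hxy : x ≠ y)
    (hS : steinerDist G {v, x, y} = ecc3 G v)
    (P : G.Walk v x) (hP : P.IsPath)
    (hlong : ∀ (z : V) (Q : G.Walk v z), Q.IsPath → Q.length ≤ P.length) :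
    distToPath G P y = eccPath G P := by
  have hconn := hT.isConnected
  have key : ∀ u : V, distToPath G P u ≤ distToPath G P y := by
    intro u
    by_cases hu : u = v ∨ u = x
    · have h0 : distToPath G P u = 0 := by
        rcases hu with rfl | rfl
        · exact Nat.le_zero.mp (by simpa [SimpleGraph.dist_self] using distToPath_le' (u := u) P P.start_mem_support)
        · exact Nat.le_zero.mp (by simpa [SimpleGraph.dist_self] using distToPath_le' (u := u) P P.end_mem_support)
      omega
    · push_neg at hu
      have hcard : ({v, x, u} : Finset V).card = 3 := by
        rw [Finset.card_insert_of_notMem (by simp [hvx, Ne.symm hu.1]),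
          Finset.card_insert_of_notMem (by simp [Ne.symm hu.2]), Finset.card_singleton]
      have hcoe : (↑({v, x, u} : Finset V) : Set V) = ({v, x, u} : Set V) := by simp
      have hmem : steinerDist G ({v, x, u} : Set V) ∈
          {n | ∃ S : Finset V, v ∈ S ∧ S.card = 3 ∧ steinerDist G (S : Set V) = n} :=
        ⟨{v, x, u}, by simp, hcard, by rw [hcoe]⟩
      have hbdd : BddAbove {n | ∃ S : Finset V, v ∈ S ∧ S.card = 3 ∧
          steinerDist G (S : Set V) = n} := by
        refine ⟨G.edgeSet.ncard, ?_⟩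
        rintro n ⟨S, -, -, rfl⟩
        exact steiner_le_card hconn _
      have h1 : steinerDist G ({v, x, u} : Set V) ≤ ecc3 G v := le_csSup hbdd hmem
      rw [steiner_eq hT P hP u, ← hS, steiner_eq hT P hP y] at h1
      omega
  have hy : distToPath G P y ∈ {n | ∃ u : V, distToPath G P u = n} := ⟨y, rfl⟩
  exact (IsGreatest.csSup_eq ⟨hy, by rintro n ⟨u, rfl⟩; exact key u⟩).symm
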